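/- arXiv:2109.04804 — 2 statements merged into one kernel-verified Lean document; each statement's English description precedes it below -/
import Mathlib

section
/- Let c = (0, 1/2, 1). For every real polynomial p of degree at most 5, with p' the derivative polynomial, both nontrivial stage quadratures of the sixth-order two-derivative Hermite–Birkhoff tableau are exact: (i) ∫₀^{1/2} p(t) dt = (101/480)·p(0) + (8/30)·p(1/2) + (55/2400)·p(1) + (65/4800)·p'(0) − (25/600)·p'(1/2) − (25/8000)·p'(1); and (ii) ∫₀^{1} p(t) dt = (7/30)·p(0) + (16/30)·p(1/2) + (7/30)·p(1) + (5/300)·p'(0) − (5/300)·p'(1). -/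
open Polynomial intervalIntegral

lemma hb_eval_aux (p : Polynomial ℝ) (hp : p.natDegree < 6) (x : ℝ) :
    p.eval x = ∑ i ∈ Finset.range 6, p.coeff i * x ^ i :=
  Polynomial.eval_eq_sum_range' hp x

lemma hb_int_aux (p : Polynomial ℝ) (hp : p.natDegree < 6) (b : ℝ) :
    ∫ t in (0:ℝ)..b, p.eval t =
      ∑ i ∈ Finset.range 6, p.coeff i * (b ^ (i + 1) / (i + 1)) := by
  have : ∀ t : ℝ, p.eval t = ∑ i ∈ Finset.range 6, p.coeff i * t ^ i :=
    hb_eval_aux p hp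
  rw [intervalIntegral.integral_congr (g := fun t => ∑ i ∈ Finset.range 6, p.coeff i * t ^ i)
      (fun t _ => this t)]
  rw [intervalIntegral.integral_finset_sum]
  · refine Finset.sum_congr rfl fun i _ => ?_
    rw [intervalIntegral.integral_const_mul, integral_pow]
    ring_nf
  · intro i _
    exact (continuous_const.mul (continuous_pow i)).intervalIntegrable _ _

/-- The two nontrivial stage quadratures of the sixth-order two-derivative
Hermite–Birkhoff tableau (nodes 0, 1/2, 1) are exact on quintic polynomials. -/
theorem hermite_birkhoff_quadrature_order6 (p : Polynomial ℝ) (hp : p.degree ≤ 5) :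
    (∫ t in (0 : ℝ)..(1 / 2 : ℝ), p.eval t =
        (101 / 480) * p.eval 0 + (8 / 30) * p.eval (1 / 2) + (55 / 2400) * p.eval 1 +
          (65 / 4800) * (p.derivative).eval 0 - (25 / 600) * (p.derivative).eval (1 / 2) -
          (25 / 8000) * (p.derivative).eval 1) ∧
    (∫ t in (0 : ℝ)..(1 : ℝ), p.eval t =
        (7 / 30) * p.eval 0 + (16 / 30) * p.eval (1 / 2) + (7 / 30) * p.eval 1 +
          (5 / 300) * (p.derivative).eval 0 - (5 / 300) * (p.derivative).eval 1) := by
  have hnd : p.natDegree < 6 := by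
    exact Nat.lt_succ_of_le (Polynomial.natDegree_le_iff_degree_le.mpr hp)
  have hnd' : p.derivative.natDegree < 6 :=
    lt_of_le_of_lt (Polynomial.natDegree_derivative_le p) (by omega)
  have hev := hb_eval_aux p hnd
  have hev' := hb_eval_aux p.derivative hnd'
  have hint := hb_int_aux p hnd
  have hc6 : p.coeff 6 = 0 := Polynomial.coeff_eq_zero_of_natDegree_lt hnd
  have hdc : ∀ i, p.derivative.coeff i = p.coeff (i + 1) * (i + 1) := fun i =>
    Polynomial.coeff_derivative p i
  constructor <;>
  · rw [hint, hev 0, hev (1/2), hev 1, hev' 0]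
    first
      | rw [hev' (1/2), hev' 1]
      | rw [hev' 1]
    simp only [Finset.sum_range_succ, Finset.sum_range_zero, hdc, hc6]
    push_cast
    ring
end

section
/- Let c = (0, 1/3, 2/3, 1). For every real polynomial p of degree at most 7, with p' the derivative polynomial, all three nontrivial stage quadratures of the eighth-order two-derivative Hermite–Birkhoff tableau are exact: (i) ∫₀^{1/3} p(t) dt = (6893/54432)·p(0) + (313/2016)·p(1/3) + (89/2016)·p(2/3) + (397/54432)·p(1) + (1283/272160)·p'(0) − (851/30240)·p'(1/3) − (269/30240)·p'(2/3) − (163/272160)·p'(1); (ii) ∫₀^{2/3} p(t) dt = (223/1701)·p(0) + (20/63)·p(1/3) + (13/63)·p(2/3) + (20/1701)·p(1) + (43/8505)·p'(0) − (16/945)·p'(1/3) − (19/945)·p'(2/3) − (8/8505)·p'(1); and (iii) ∫₀^{1} p(t) dt = (31/224)·p(0) + (81/224)·p(1/3) + (81/224)·p(2/3) + (31/224)·p(1) + (19/3360)·p'(0) − (9/1120)·p'(1/3) + (9/1120)·p'(2/3) − (19/3360)·p'(1). -/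
open Polynomial intervalIntegral

private lemma hb_integral (c : ℝ) (p : Polynomial ℝ) (hd : p.natDegree < 8) :
    ∫ t in (0 : ℝ)..c, p.eval t =
      ∑ i ∈ Finset.range 8, p.coeff i * (c ^ (i + 1) / (i + 1)) := by
  have h : ∀ t : ℝ, p.eval t = ∑ i ∈ Finset.range 8, p.coeff i * t ^ i :=
    fun t => p.eval_eq_sum_range' hd t
  rw [intervalIntegral.integral_congr (fun t _ => h t),
    intervalIntegral.integral_finset_sum]
  · refine Finset.sum_congr rfl fun i _ => ?_
    rw [intervalIntegral.integral_const_mul, integral_pow]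
    simp [zero_pow (Nat.succ_ne_zero i)]
  · intro i _
    exact ((continuous_const.mul (continuous_pow i)).intervalIntegrable _ _)

private lemma hb_eval (p : Polynomial ℝ) (hd : p.natDegree < 8) (x : ℝ) :
    p.eval x = ∑ i ∈ Finset.range 8, p.coeff i * x ^ i :=
  p.eval_eq_sum_range' hd x

/-- The three nontrivial stage quadratures of the eighth-order two-derivative
Hermite–Birkhoff tableau (nodes 0, 1/3, 2/3, 1) are exact on polynomials of
degree at most 7. -/
theorem hermite_birkhoff_quadrature_order8 (p : Polynomial ℝ) (hp : p.degree ≤ 7) :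
    (∫ t in (0 : ℝ)..(1 / 3 : ℝ), p.eval t =
        (6893 / 54432) * p.eval 0 + (313 / 2016) * p.eval (1 / 3) +
          (89 / 2016) * p.eval (2 / 3) + (397 / 54432) * p.eval 1 +
          (1283 / 272160) * (p.derivative).eval 0 -
          (851 / 30240) * (p.derivative).eval (1 / 3) -
          (269 / 30240) * (p.derivative).eval (2 / 3) -
          (163 / 272160) * (p.derivative).eval 1) ∧
    (∫ t in (0 : ℝ)..(2 / 3 : ℝ), p.eval t =
        (223 / 1701) * p.eval 0 + (20 / 63) * p.eval (1 / 3) +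
          (13 / 63) * p.eval (2 / 3) + (20 / 1701) * p.eval 1 +
          (43 / 8505) * (p.derivative).eval 0 -
          (16 / 945) * (p.derivative).eval (1 / 3) -
          (19 / 945) * (p.derivative).eval (2 / 3) -
          (8 / 8505) * (p.derivative).eval 1) ∧
    (∫ t in (0 : ℝ)..(1 : ℝ), p.eval t =
        (31 / 224) * p.eval 0 + (81 / 224) * p.eval (1 / 3) +
          (81 / 224) * p.eval (2 / 3) + (31 / 224) * p.eval 1 +
          (19 / 3360) * (p.derivative).eval 0 -
          (9 / 1120) * (p.derivative).eval (1 / 3) +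
          (9 / 1120) * (p.derivative).eval (2 / 3) -
          (19 / 3360) * (p.derivative).eval 1) := by
  have hd : p.natDegree < 8 :=
    Nat.lt_succ_of_le (Polynomial.natDegree_le_of_degree_le hp)
  have hd' : p.derivative.natDegree < 8 :=
    lt_of_le_of_lt (Polynomial.natDegree_derivative_le p) (by omega)
  have hc8 : p.coeff 8 = 0 := Polynomial.coeff_eq_zero_of_natDegree_lt hd
  have hcd : ∀ i, p.derivative.coeff i = p.coeff (i + 1) * (i + 1) :=
    fun i => Polynomial.coeff_derivative p i
  refine ⟨?_, ?_, ?_⟩ <;>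
  · rw [hb_integral _ p hd, hb_eval p hd, hb_eval p hd, hb_eval p hd, hb_eval p hd,
      hb_eval p.derivative hd', hb_eval p.derivative hd',
      hb_eval p.derivative hd', hb_eval p.derivative hd']
    simp only [Finset.sum_range_succ, Finset.sum_range_zero, hcd, hc8]
    push_cast
    ring
end
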